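/- Define learning rates α_t = (H+1)/(H+t) for t ≥ 1, and weights α_t^i = α_i · ∏_{j=i+1}^t (1 − α_j) for 1 ≤ i ≤ t. Then for every t ≥ 1: 1/t ≤ ∑_{i=1}^t α_t^i/i ≤ 2/t. -/

import Mathlib

/-- Learning rate `α_t = (H+1)/(H+t)`. -/
noncomputable def lr (H t : ℕ) : ℝ := (H + 1) / (H + t)

/-- Weight `α_t^i = α_i ∏_{j=i+1}^t (1 - α_j)`. -/
noncomputable def lrW (H t i : ℕ) : ℝ :=
  lr H i * ∏ j ∈ Finset.Icc (i + 1) t, (1 - lr H j)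

theorem stmt4 (H : ℕ) (hH : 1 ≤ H) (t : ℕ) (ht : 1 ≤ t) :
    1 / (t : ℝ) ≤ ∑ i ∈ Finset.Icc 1 t, lrW H t i / i ∧
    ∑ i ∈ Finset.Icc 1 t, lrW H t i / i ≤ 2 / (t : ℝ) := by
  induction t, ht using Nat.le_induction with
  | base =>
    have h0 : (H : ℝ) + 1 ≠ 0 := by positivity
    simp [lrW, lr, Finset.Icc_eq_empty, div_self h0]
  | succ t ht ih =>
    have htr : (1:ℝ) ≤ t := by exact_mod_cast ht
    have hhr : (1:ℝ) ≤ H := by exact_mod_cast hH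
    have hden : (0:ℝ) < H + t + 1 := by linarith
    have hα : lr H (t+1) = ((H:ℝ)+1)/((H:ℝ)+t+1) := by
      simp [lr]; push_cast; ring_nf
    have hα0 : 0 ≤ lr H (t+1) := by rw [hα]; positivity
    have hα1 : lr H (t+1) ≤ 1 := by
      rw [hα, div_le_one hden]; linarith
    have hsum : ∑ i ∈ Finset.Icc 1 (t+1), lrW H (t+1) i / i =
        (1 - lr H (t+1)) * (∑ i ∈ Finset.Icc 1 t, lrW H t i / i)
          + lr H (t+1) / (t+1) := by
      rw [Finset.sum_Icc_succ_top (by omega : 1 ≤ t+1)]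
      have h1 : lrW H (t+1) (t+1) = lr H (t+1) := by
        simp [lrW, Finset.Icc_eq_empty_of_lt (by omega : t+1 < t+1+1)]
      have h2 : ∀ i ∈ Finset.Icc 1 t, lrW H (t+1) i / i =
          (1 - lr H (t+1)) * (lrW H t i / i) := by
        intro i hi
        simp only [Finset.mem_Icc] at hi
        rw [lrW, Finset.prod_Icc_succ_top (by omega : i+1 ≤ t+1)]
        rw [lrW]; ring
      rw [Finset.sum_congr rfl h2, ← Finset.mul_sum, h1]
      push_cast; ring
    obtain ⟨ih1, ih2⟩ := ih
    rw [hsum]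
    have hnn : 0 ≤ 1 - lr H (t+1) := by linarith
    constructor
    · have step : (1 - lr H (t+1)) * (1/(t:ℝ)) ≤
          (1 - lr H (t+1)) * (∑ i ∈ Finset.Icc 1 t, lrW H t i / i) :=
        mul_le_mul_of_nonneg_left ih1 hnn
      have key : 1 / ((t:ℝ)+1) ≤ (1 - lr H (t+1)) * (1/(t:ℝ)) + lr H (t+1) / (t+1) := by
        rw [hα]
        have ht0 : (0:ℝ) < t := by linarith
        have ht1 : (0:ℝ) < (t:ℝ) + 1 := by linarith
        field_simp
        nlinarith [mul_pos ht0 hden, mul_pos hden ht1,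
          mul_nonneg (mul_nonneg (mul_nonneg (show (0:ℝ) ≤ (H:ℝ) - 1 by linarith) ht0.le) hden.le) ht1.le]
      push_cast
      linarith
    · have step : (1 - lr H (t+1)) * (∑ i ∈ Finset.Icc 1 t, lrW H t i / i) ≤
          (1 - lr H (t+1)) * (2/(t:ℝ)) :=
        mul_le_mul_of_nonneg_left ih2 hnn
      have key : (1 - lr H (t+1)) * (2/(t:ℝ)) + lr H (t+1) / (t+1) ≤ 2 / ((t:ℝ)+1) := by
        rw [hα]
        have ht0 : (0:ℝ) < t := by linarith
        have ht1 : (0:ℝ) < (t:ℝ) + 1 := by linarith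
        field_simp
        nlinarith [mul_pos ht0 hden, mul_pos hden ht1,
          mul_nonneg (mul_nonneg (mul_nonneg (show (0:ℝ) ≤ (H:ℝ) - 1 by linarith) ht0.le) hden.le) ht1.le]
      push_cast
      linarith
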